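/- Let E be a small category and φ : Eᵒᵖ ⥤ Set a weight. If the canonical map can : Colim_φ(e ↦ Nat(φ, E(−, e))) → Nat(φ, φ) — sending the class represented by (e, x ∈ φ(e), τ : φ ⟶ E(−, e)) to x̂ ∘ τ, where x̂ : E(−, e) ⟶ φ corresponds to x under the Yoneda lemma — is a bijection, then Colim_φ preserves the ψ-weighted limit of every diagram G : Dᵒᵖ ⥤ (E ⥤ Set), for every weight ψ : Dᵒᵖ ⥤ Set whatsoever. In particular, the class of all weights (over Set) is sound. -/

import Mathlib

open CategoryTheory CategoryTheory.Limits Opposite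

namespace Paper

/-- The category of elements `el(φ)` of a weight `φ : Eᵒᵖ ⥤ Type`:
objects are pairs `(e, x)` with `x ∈ φ(e)`, a morphism `(e,x) → (e',x')` is
`t : e ⟶ e'` with `φ(t)(x') = x`. -/
abbrev elCat {E : Type} [SmallCategory E] (φ : Eᵒᵖ ⥤ Type) : Type :=
  (Functor.Elements φ)ᵒᵖ

/-- The projection `p : el(φ) ⥤ E`. -/
def elProj {E : Type} [SmallCategory E] (φ : Eᵒᵖ ⥤ Type) : elCat φ ⥤ E :=
  (CategoryOfElements.π φ).leftOp

/-- The object `(e, x)` of `el(φ)`. -/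
def elObj {E : Type} [SmallCategory E] (φ : Eᵒᵖ ⥤ Type) (e : E) (x : φ.obj (op e)) :
    elCat φ :=
  op ⟨op e, x⟩

/-- The `φ`-weighted colimit functor `Colim_φ : (E ⥤ Set) ⥤ Set`,
sending `F` to the colimit of `p ⋙ F` where `p : el(φ) ⥤ E`. -/
noncomputable def wColim {E : Type} [SmallCategory E] (φ : Eᵒᵖ ⥤ Type) :
    (E ⥤ Type) ⥤ Type :=
  (Functor.whiskeringLeft (elCat φ) E Type).obj (elProj φ) ⋙ colim

/-- The `ψ`-weighted limit of a diagram `G : Dᵒᵖ ⥤ (E ⥤ Set)`, computed pointwise: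
`(Lim_ψ G)(e) = Nat(ψ, G(−)(e))`. -/
def wLim {D E : Type} [SmallCategory D] [SmallCategory E]
    (ψ : Dᵒᵖ ⥤ Type) (G : Dᵒᵖ ⥤ E ⥤ Type) : E ⥤ Type :=
  G.flip ⋙ coyoneda.obj (op ψ)

/-- Evaluation of the weighted limit at `y ∈ ψ(d)`. -/
def wLimEval {D E : Type} [SmallCategory D] [SmallCategory E]
    (ψ : Dᵒᵖ ⥤ Type) (G : Dᵒᵖ ⥤ E ⥤ Type) (d : Dᵒᵖ) (y : ψ.obj d) :
    wLim ψ G ⟶ G.obj d where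
  app e := TypeCat.ofHom fun α => α.app d y
  naturality e e' f := rfl

/-- The canonical comparison `H(Lim_ψ G) → Nat(ψ, H ∘ G)` for a functor
`H : (E ⥤ Set) ⥤ Set`.  `H` preserves the `ψ`-weighted limit of `G` precisely
when this map is a bijection. -/
def wLimComparison {D E : Type} [SmallCategory D] [SmallCategory E]
    (H : (E ⥤ Type) ⥤ Type) (ψ : Dᵒᵖ ⥤ Type) (G : Dᵒᵖ ⥤ E ⥤ Type) :
    H.obj (wLim ψ G) → (ψ ⟶ G ⋙ H) := fun z =>
  { app := fun d => TypeCat.ofHom fun y => H.map (wLimEval ψ G d y) z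
    naturality := fun d d' g => by
      ext y
      have h : wLimEval ψ G d' (ψ.map g y) = wLimEval ψ G d y ≫ G.map g := by
        ext e α
        exact types_congr_hom (α.naturality g) y
      change H.map (wLimEval ψ G d' (ψ.map g y)) z =
        (H.map (G.map g)) (H.map (wLimEval ψ G d y) z)
      rw [h, H.map_comp]
      rfl }

/-- A bundled weight: a small category `D` together with a functor `Dᵒᵖ ⥤ Set`. -/
structure Weight : Type 1 where
  D : Type
  [instD : SmallCategory D]
  w : D ᵒᵖ ⥤ Type

attribute [instance] Weight.instD

/-- A class of weights. -/
abbrev WeightClass : Type 1 := Weight → Prop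

/-- A weight `φ : Eᵒᵖ ⥤ Set` is `Ψ`-flat if `Colim_φ` preserves the `ψ`-weighted
limit of every diagram `G : Dᵒᵖ ⥤ (E ⥤ Set)`, for every `ψ` in `Ψ`. -/
def IsFlat (Ψ : WeightClass) {E : Type} [SmallCategory E] (φ : Eᵒᵖ ⥤ Type) : Prop :=
  ∀ W : Weight, Ψ W → ∀ G : W.Dᵒᵖ ⥤ E ⥤ Type,
    Function.Bijective (wLimComparison (wColim φ) W.w G)

/-- `Ψ` is sound if every weight `φ` is `Ψ`-flat as soon as `Colim_φ` preserves
the `ψ`-weighted limits of all representable-valued diagrams `d ↦ E(T d, −)`. -/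
def IsSound (Ψ : WeightClass) : Prop :=
  ∀ (E : Type) [SmallCategory E] (φ : Eᵒᵖ ⥤ Type),
    (∀ W : Weight, Ψ W → ∀ T : W.D ⥤ E,
      Function.Bijective (wLimComparison (wColim φ) W.w (T.op ⋙ coyoneda))) →
    IsFlat Ψ φ



/-- The cocone defining the canonical map
`Colim_φ (e ↦ Nat(ψ', E(−,e))) → Nat(ψ', φ)`. -/
def canCocone {E : Type} [SmallCategory E] (φ ψ' : Eᵒᵖ ⥤ Type) :
    Cocone (elProj φ ⋙ (yoneda ⋙ coyoneda.obj (op ψ'))) where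
  pt := ψ' ⟶ φ
  ι :=
    { app := fun j => TypeCat.ofHom fun τ => τ ≫ yonedaEquiv.symm j.unop.2
      naturality := fun j j' f => by
        ext τ
        change (τ ≫ yoneda.map f.unop.val.unop) ≫ yonedaEquiv.symm j'.unop.2 =
          τ ≫ yonedaEquiv.symm j.unop.2
        rw [Category.assoc]
        congr 1
        have := yonedaEquiv_symm_map f.unop.val j'.unop.2
        rw [f.unop.property] at this
        exact this.symm }

/-- The canonical map `can : Colim_φ (e ↦ Nat(ψ', E(−,e))) → Nat(ψ', φ)`,
sending the class of `(e, x ∈ φ(e), τ : ψ' ⟶ E(−,e))` to `x̂ ∘ τ`, where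
`x̂ : E(−,e) ⟶ φ` corresponds to `x` under the Yoneda lemma. -/
noncomputable def canMap {E : Type} [SmallCategory E] (φ ψ' : Eᵒᵖ ⥤ Type) :
    (wColim φ).obj (yoneda ⋙ coyoneda.obj (op ψ')) → (ψ' ⟶ φ) :=
  ⇑(colimit.desc (elProj φ ⋙ (yoneda ⋙ coyoneda.obj (op ψ'))) (canCocone φ ψ'))




section Aux

variable {E : Type} [SmallCategory E] (φ : Eᵒᵖ ⥤ Type)

/-- The cocone exhibiting `F(e₀)` as a cocone over `p ⋙ F`, induced by
`τ : φ ⟶ E(−, e₀)`. -/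
def projCocone (e₀ : E) (τ : φ ⟶ yoneda.obj e₀) (F : E ⥤ Type) :
    Cocone (elProj φ ⋙ F) where
  pt := F.obj e₀
  ι :=
    { app := fun j => TypeCat.ofHom fun y => F.map (τ.app j.unop.1 j.unop.2) y
      naturality := fun j j' f => by
        ext y
        change F.map (τ.app j'.unop.1 j'.unop.2) (F.map f.unop.val.unop y) =
          F.map (τ.app j.unop.1 j.unop.2) y
        have h1 : φ.map f.unop.val j'.unop.2 = j.unop.2 := f.unop.property
        have h2 := types_congr_hom (τ.naturality f.unop.val) j'.unop.2
        have h3 : τ.app j.unop.1 j.unop.2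
            = f.unop.val.unop ≫ τ.app j'.unop.1 j'.unop.2 := by
          conv_lhs => rw [← h1]
          exact h2
        rw [h3]
        exact (FunctorToTypes.map_comp_apply F _ _ y).symm }

/-- The map `Colim_φ F → F(e₀)` induced by `τ : φ ⟶ E(−, e₀)`. -/
noncomputable def iMap (e₀ : E) (τ : φ ⟶ yoneda.obj e₀) (F : E ⥤ Type) :
    (wColim φ).obj F → F.obj e₀ :=
  ⇑(colimit.desc (elProj φ ⋙ F) (projCocone φ e₀ τ F))

lemma iMap_ι (e₀ : E) (τ : φ ⟶ yoneda.obj e₀) (F : E ⥤ Type) (j : elCat φ)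
    (y : F.obj ((elProj φ).obj j)) :
    iMap φ e₀ τ F (colimit.ι (elProj φ ⋙ F) j y)
      = F.map (τ.app j.unop.1 j.unop.2) y :=
  types_congr_hom (colimit.ι_desc (projCocone φ e₀ τ F) j) y

lemma wColim_map_ι {F F' : E ⥤ Type} (α : F ⟶ F') (j : elCat φ)
    (y : F.obj ((elProj φ).obj j)) :
    (wColim φ).map α (colimit.ι (elProj φ ⋙ F) j y)
      = colimit.ι (elProj φ ⋙ F') j (α.app ((elProj φ).obj j) y) :=
  types_congr_hom (colimit.ι_map (Functor.whiskerLeft (elProj φ) α) j) y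

lemma iMap_retract (e₀ : E) (x₀ : φ.obj (op e₀)) (τ : φ ⟶ yoneda.obj e₀)
    (hτ : τ ≫ yonedaEquiv.symm x₀ = 𝟙 φ) (F : E ⥤ Type)
    (w : (wColim φ).obj F) :
    colimit.ι (elProj φ ⋙ F) (elObj φ e₀ x₀) (iMap φ e₀ τ F w) = w := by
  obtain ⟨j, y, rfl⟩ := Types.jointly_surjective' (F := elProj φ ⋙ F) w
  rw [iMap_ι]
  have hx : φ.map (τ.app j.unop.1 j.unop.2).op x₀ = j.unop.2 := by
    have := types_congr_hom (NatTrans.congr_app hτ j.unop.1) j.unop.2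
    exact this
  let m : (elObj φ e₀ x₀).unop ⟶ j.unop :=
    ⟨(τ.app j.unop.1 j.unop.2).op, hx⟩
  exact types_congr_hom (colimit.w (elProj φ ⋙ F) m.op) y

lemma iMap_nat (e₀ : E) (τ : φ ⟶ yoneda.obj e₀) {F F' : E ⥤ Type}
    (α : F ⟶ F') (w : (wColim φ).obj F) :
    iMap φ e₀ τ F' ((wColim φ).map α w) = α.app e₀ (iMap φ e₀ τ F w) := by
  obtain ⟨j, y, rfl⟩ := Types.jointly_surjective' (F := elProj φ ⋙ F) w
  rw [wColim_map_ι, iMap_ι, iMap_ι]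
  exact (types_congr_hom (α.naturality (τ.app j.unop.1 j.unop.2)) y).symm

/-- Core lemma: if `φ` is a retract of a representable, then `Colim_φ`
preserves all weighted limits. -/
theorem bij_of_retract (e₀ : E) (x₀ : φ.obj (op e₀)) (τ : φ ⟶ yoneda.obj e₀)
    (hτ : τ ≫ yonedaEquiv.symm x₀ = 𝟙 φ)
    (D : Type) [SmallCategory D] (ψ : Dᵒᵖ ⥤ Type) (G : Dᵒᵖ ⥤ E ⥤ Type) :
    Function.Bijective (wLimComparison (wColim φ) ψ G) := by
  have key : ∀ (z : (wColim φ).obj (wLim ψ G)) (d : Dᵒᵖ) (y : ψ.obj d),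
      (iMap φ e₀ τ (wLim ψ G) z).app d y
        = iMap φ e₀ τ (G.obj d) ((wLimComparison (wColim φ) ψ G z).app d y) := by
    intro z d y
    change _ = iMap φ e₀ τ (G.obj d) ((wColim φ).map (wLimEval ψ G d y) z)
    rw [iMap_nat]
    rfl
  constructor
  · intro z z' hzz
    have hz := iMap_retract φ e₀ x₀ τ hτ (wLim ψ G) z
    have hz' := iMap_retract φ e₀ x₀ τ hτ (wLim ψ G) z'
    have hi : iMap φ e₀ τ (wLim ψ G) z = iMap φ e₀ τ (wLim ψ G) z' := by
      apply NatTrans.ext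
      funext d
      ext y
      change (iMap φ e₀ τ (wLim ψ G) z).app d y = (iMap φ e₀ τ (wLim ψ G) z').app d y
      rw [key, key, hzz]
    rw [← hz, ← hz', hi]
  · intro η
    let ζ : (wLim ψ G).obj e₀ :=
      { app := fun d => TypeCat.ofHom fun y => iMap φ e₀ τ (G.obj d) (η.app d y)
        naturality := fun d d' g => by
          ext y
          have h1 : η.app d' (ψ.map g y) = (G ⋙ wColim φ).map g (η.app d y) :=
            types_congr_hom (η.naturality g) y
          change iMap φ e₀ τ (G.obj d') (η.app d' (ψ.map g y)) = _
          rw [h1]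
          change _ = (G.map g).app e₀ (iMap φ e₀ τ (G.obj d) (η.app d y))
          rw [← iMap_nat]
          rfl }
    refine ⟨colimit.ι (elProj φ ⋙ wLim ψ G) (elObj φ e₀ x₀) ζ, ?_⟩
    ext d y
    change (wColim φ).map (wLimEval ψ G d y)
        (colimit.ι (elProj φ ⋙ wLim ψ G) (elObj φ e₀ x₀) ζ) = η.app d y
    refine (wColim_map_ι φ (wLimEval ψ G d y) (elObj φ e₀ x₀) ζ).trans ?_
    exact iMap_retract φ e₀ x₀ τ hτ (G.obj d) (η.app d y)

/-- The co-Yoneda evaluation cocone: `Colim_φ E(d, −) → φ(d)`. -/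
def coYonedaCocone (d : Eᵒᵖ) : Cocone (elProj φ ⋙ coyoneda.obj d) where
  pt := φ.obj d
  ι :=
    { app := fun j => TypeCat.ofHom fun (g : d.unop ⟶ (elProj φ).obj j) => φ.map g.op j.unop.2
      naturality := fun j j' f => by
        ext g
        change φ.map (g ≫ f.unop.val.unop).op j'.unop.2 = φ.map g.op j.unop.2
        have h1 : φ.map f.unop.val j'.unop.2 = j.unop.2 := f.unop.property
        exact (FunctorToTypes.map_comp_apply φ f.unop.val g.op j'.unop.2).trans
          (congrArg (φ.map g.op) h1) }

end Aux



section Aux2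

variable {E : Type} [SmallCategory E] (φ : Eᵒᵖ ⥤ Type)

/-- The co-Yoneda unit `φ ⟶ (d ↦ Colim_φ E(d, −))`, sending `x ∈ φ(d)` to the
class of `(d, x, 𝟙 d)`. -/
noncomputable def coYonedaUnit :
    φ ⟶ ((𝟭 E).op ⋙ coyoneda) ⋙ wColim φ where
  app d := TypeCat.ofHom fun x => colimit.ι (elProj φ ⋙ ((𝟭 E).op ⋙ coyoneda).obj d)
    (elObj φ d.unop x) (𝟙 d.unop)
  naturality d d' g := by
    ext x
    have h1 := wColim_map_ι φ (F := ((𝟭 E).op ⋙ coyoneda).obj d)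
      (F' := ((𝟭 E).op ⋙ coyoneda).obj d') (((𝟭 E).op ⋙ coyoneda).map g)
      (elObj φ d.unop x) (𝟙 d.unop)
    let m : (elObj φ d.unop x).unop ⟶ (elObj φ d'.unop (φ.map g x)).unop :=
      ⟨g, rfl⟩
    have h2 := types_congr_hom (colimit.w
      (elProj φ ⋙ ((𝟭 E).op ⋙ coyoneda).obj d') m.op) (𝟙 d'.unop)
    have h1' : (wColim φ).map (coyoneda.map ((𝟭 E).op.map g))
        (colimit.ι (elProj φ ⋙ ((𝟭 E).op ⋙ coyoneda).obj d)
          (elObj φ d.unop x) (𝟙 d.unop))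
        = colimit.ι (elProj φ ⋙ ((𝟭 E).op ⋙ coyoneda).obj d')
          (elObj φ d.unop x) (g.unop ≫ 𝟙 d.unop) := h1
    have h2' : colimit.ι (elProj φ ⋙ ((𝟭 E).op ⋙ coyoneda).obj d')
          (elObj φ d.unop x) (𝟙 d'.unop ≫ g.unop)
        = colimit.ι (elProj φ ⋙ ((𝟭 E).op ⋙ coyoneda).obj d')
          (elObj φ d'.unop (φ.map g x)) (𝟙 d'.unop) := h2
    change colimit.ι (elProj φ ⋙ ((𝟭 E).op ⋙ coyoneda).obj d')
          (elObj φ d'.unop (φ.map g x)) (𝟙 d'.unop) =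
      (wColim φ).map (coyoneda.map ((𝟭 E).op.map g))
        (colimit.ι (elProj φ ⋙ ((𝟭 E).op ⋙ coyoneda).obj d)
          (elObj φ d.unop x) (𝟙 d.unop))
    rw [h1', ← h2']
    exact congrArg (ConcreteCategory.hom (colimit.ι (elProj φ ⋙ ((𝟭 E).op ⋙ coyoneda).obj d')
      (elObj φ d.unop x))) ((Category.id_comp _).trans (Category.comp_id _).symm)

/-- From preservation of the `φ`-weighted limit of the representable diagram
`d ↦ E(d, −)`, extract a presentation of `φ` as a retract of a representable. -/
theorem exists_retract
    (hb : Function.Bijective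
      (wLimComparison (wColim φ) φ ((𝟭 E).op ⋙ coyoneda))) :
    ∃ (e₀ : E) (x₀ : φ.obj (op e₀)) (τ : φ ⟶ yoneda.obj e₀),
      τ ≫ yonedaEquiv.symm x₀ = 𝟙 φ := by
  obtain ⟨z, hz⟩ := hb.2 (coYonedaUnit φ)
  obtain ⟨j, σ, rfl⟩ := Types.jointly_surjective'
    (F := elProj φ ⋙ wLim φ ((𝟭 E).op ⋙ coyoneda)) z
  refine ⟨unop j.unop.1, j.unop.2,
    (σ : φ ⟶ yoneda.obj (unop j.unop.1)), ?_⟩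
  apply NatTrans.ext
  funext d
  ext x
  change (yonedaEquiv.symm j.unop.2).app d (σ.app d x) = x
  change φ.map (σ.app d x).op j.unop.2 = x
  have hcomp := types_congr_hom (NatTrans.congr_app hz d) x
  have hL := wColim_map_ι φ (wLimEval φ ((𝟭 E).op ⋙ coyoneda) d x) j σ
  have heq : colimit.ι (elProj φ ⋙ ((𝟭 E).op ⋙ coyoneda).obj d) j (σ.app d x)
      = colimit.ι (elProj φ ⋙ ((𝟭 E).op ⋙ coyoneda).obj d)
          (elObj φ d.unop x) (𝟙 d.unop) := hL.symm.trans hcomp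
  have hq1 := types_congr_hom (colimit.ι_desc (coYonedaCocone φ d) j) (σ.app d x)
  have hq2 := types_congr_hom (colimit.ι_desc (coYonedaCocone φ d)
    (elObj φ d.unop x)) (𝟙 d.unop)
  exact hq1.symm.trans ((congrArg (ConcreteCategory.hom
    (colimit.desc (elProj φ ⋙ coyoneda.obj d) (coYonedaCocone φ d))) heq).trans
    (hq2.trans (FunctorToTypes.map_id_apply φ x)))

end Aux2


/-- If the canonical coend map
`can : Colim_φ(e ↦ Nat(φ, E(−,e))) → Nat(φ, φ)` is a bijection, then `Colim_φ`
preserves the `ψ`-weighted limit of every diagram `G : Dᵒᵖ ⥤ (E ⥤ Set)` for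
*every* weight `ψ` whatsoever.  In particular, the class of all weights is sound. -/
theorem flatness_from_single_canonical_map
    (E : Type) [SmallCategory E] (φ : Eᵒᵖ ⥤ Type)
    (h : Function.Bijective (canMap φ φ)) :
    (∀ (D : Type) [SmallCategory D] (ψ : Dᵒᵖ ⥤ Type) (G : Dᵒᵖ ⥤ E ⥤ Type),
      Function.Bijective (wLimComparison (wColim φ) ψ G)) ∧
    IsSound (fun _ : Weight => True) := by
  constructor
  · obtain ⟨z, hz⟩ := h.2 (𝟙 φ)
    obtain ⟨j, τ, rfl⟩ := Types.jointly_surjective'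
      (F := elProj φ ⋙ (yoneda ⋙ coyoneda.obj (op φ))) z
    have hτ : (τ : φ ⟶ yoneda.obj (unop j.unop.1)) ≫
        yonedaEquiv.symm j.unop.2 = 𝟙 φ :=
      (types_congr_hom (colimit.ι_desc (canCocone φ φ) j) τ).symm.trans hz
    exact fun D _ ψ G => bij_of_retract φ (unop j.unop.1) j.unop.2 τ hτ D ψ G
  · intro E' _ φ' hyp W _ G
    obtain ⟨e₀, x₀, τ, hτ⟩ := exists_retract φ'
      (hyp ⟨E', φ'⟩ trivial (𝟭 E'))
    exact bij_of_retract φ' e₀ x₀ τ hτ W.D W.w G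

end Paper
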